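/- Suppose δ ∈ [0,1) and a buyer of type θ finds purchasing allocation x_t at price p_t at time t weakly preferable to any stopping rule τ over future offers (x_τ, p_τ) with x_τ ≤ x_t almost surely: u(x_t, θ) − p_t ≥ E[δ^τ (u(x_τ, θ) − p_τ)]. Then any type θ' > θ strictly prefers to purchase immediately: u(x_t, θ') − p_t > E[δ^τ (u(x_τ, θ') − p_τ)], provided the actual consumption x^a(x_t, θ) > 0. (Skimming property.) -/

import Mathlib

open MeasureTheory

/-- Skimming property: if type `θ` weakly prefers buying
`(x_t, p_t)` now to any (random) future offer `(x_τ, p_τ)` with `x_τ ≤ x_t`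
discounted by `δ^τ`, and `θ`'s actual consumption at `x_t` is positive, then
every higher type `θ' > θ` strictly prefers to buy now. -/
theorem skimming_property
    (xbar : ℝ) (hxbar : 0 < xbar)
    (v : ℝ → ℝ)
    (hconc : StrictConcaveOn ℝ (Set.Icc 0 xbar) v)
    (hcont : ContinuousOn v (Set.Icc 0 xbar))
    (hv0 : v 0 = 0)
    (u : ℝ → ℝ → ℝ)
    (hu : ∀ x ∈ Set.Ioc 0 xbar, ∀ θ : ℝ,
      IsGreatest ((fun x' => v x' + θ * x') '' Set.Icc 0 x) (u x θ))
    (xe : ℝ → ℝ)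
    (hxe_mem : ∀ θ, xe θ ∈ Set.Icc 0 xbar)
    (hxe_max : ∀ θ, ∀ x' ∈ Set.Icc 0 xbar, v x' + θ * x' ≤ v (xe θ) + θ * xe θ)
    (δ : ℝ) (hδ : δ ∈ Set.Ico (0 : ℝ) 1)
    (Ω : Type*) [MeasurableSpace Ω] (μ : Measure Ω) [IsProbabilityMeasure μ]
    (t : ℕ) (τ : Ω → ℕ) (hτ : ∀ ω, t + 1 ≤ τ ω)
    (xt pt : ℝ) (hxt : xt ∈ Set.Ioc 0 xbar)
    (X P : Ω → ℝ)
    (hX : ∀ᵐ ω ∂μ, X ω ∈ Set.Ioc 0 xt)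
    (hint : ∀ θ' : ℝ,
      Integrable (fun ω => δ ^ (τ ω - t) * (u (X ω) θ' - P ω)) μ)
    (θ θ' : ℝ) (hθ : θ < θ')
    (hpos : 0 < min xt (xe θ))
    (hpref : u xt θ - pt ≥ ∫ ω, δ ^ (τ ω - t) * (u (X ω) θ - P ω) ∂μ) :
    u xt θ' - pt > ∫ ω, δ ^ (τ ω - t) * (u (X ω) θ' - P ω) ∂μ := by
  obtain ⟨hδ0, hδ1⟩ := hδ
  have hxt0 : 0 < xt := hxt.1
  have hxtb : xt ≤ xbar := hxt.2
  set m : ℝ := min xt (xe θ) with hm_def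
  have hc : 0 < (θ' - θ) * m := mul_pos (sub_pos.2 hθ) hpos
  -- achievers and upper bounds from IsGreatest
  have hach : ∀ x ∈ Set.Ioc 0 xbar, ∀ θ'' : ℝ,
      ∃ a, a ∈ Set.Icc 0 x ∧ v a + θ'' * a = u x θ'' := by
    intro x hx θ''
    obtain ⟨a, ha, hva⟩ := (hu x hx θ'').1
    exact ⟨a, ha, hva⟩
  have hle : ∀ x ∈ Set.Ioc 0 xbar, ∀ θ'' : ℝ, ∀ a ∈ Set.Icc 0 x,
      v a + θ'' * a ≤ u x θ'' := by
    intro x hx θ'' a ha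
    exact (hu x hx θ'').2 ⟨a, ha, rfl⟩
  -- concavity of the objective for type θ
  have hfconc : ConcaveOn ℝ (Set.Icc 0 xbar) (fun x => v x + θ * x) := by
    refine ⟨convex_Icc _ _, ?_⟩
    intro x hx y hy a b ha hb hab
    have h := hconc.concaveOn.2 hx hy ha hb hab
    simp only [smul_eq_mul] at *
    nlinarith
  -- Step A: m achieves the max for type θ at xt, hence the gap is at least (θ'-θ)*m
  have hm_mem : m ∈ Set.Icc 0 xt := ⟨le_of_lt hpos, min_le_left _ _⟩
  have hA_eq : v m + θ * m = u xt θ := by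
    refine le_antisymm (hle xt ⟨hxt0, hxtb⟩ θ m hm_mem) ?_
    obtain ⟨b, hb, hvb⟩ := hach xt ⟨hxt0, hxtb⟩ θ
    rw [← hvb]
    have hbbar : b ∈ Set.Icc 0 xbar := ⟨hb.1, hb.2.trans hxtb⟩
    rcases le_total (xe θ) xt with hcase | hcase
    · have : m = xe θ := min_eq_right hcase
      rw [this]
      exact hxe_max θ b hbbar
    · have hmxt : m = xt := min_eq_left hcase
      rw [hmxt]
      rcases eq_or_lt_of_le hb.2 with hbe | hbe
      · rw [hbe]
      · -- b < xt ≤ xe θ : concavity gives v b + θ b ≤ v xt + θ xt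
        have hden : 0 < xe θ - b := by linarith [hcase, hbe]
        have hne : xe θ - b ≠ 0 := ne_of_gt hden
        obtain ⟨lam, lam', hlam0, hlam'0, hsum, hcomb⟩ :
            ∃ lam lam' : ℝ, 0 ≤ lam ∧ 0 ≤ lam' ∧ lam + lam' = 1 ∧
              lam • b + lam' • xe θ = xt :=
          ⟨(xe θ - xt) / (xe θ - b), (xt - b) / (xe θ - b),
            div_nonneg (by linarith) hden.le, div_nonneg (by linarith) hden.le,
            by field_simp; ring, by simp only [smul_eq_mul]; field_simp; ring⟩
        have hcc := hfconc.2 hbbar (hxe_mem θ) hlam0 hlam'0 hsum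
        rw [hcomb] at hcc
        simp only [smul_eq_mul] at hcc
        have hmax := hxe_max θ b hbbar
        have key : lam' * (v b + θ * b) ≤ lam' * (v (xe θ) + θ * xe θ) :=
          mul_le_mul_of_nonneg_left hmax hlam'0
        have hfb : lam * (v b + θ * b) + lam' * (v b + θ * b) = v b + θ * b := by
          rw [← add_mul, hsum, one_mul]
        linarith
  have hA : u xt θ + (θ' - θ) * m ≤ u xt θ' := by
    have h1 := hle xt ⟨hxt0, hxtb⟩ θ' m hm_mem
    nlinarith [hA_eq]
  set G : ℝ := u xt θ' - u xt θ with hG_def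
  have hG : 0 < G := lt_of_lt_of_le hc (by linarith)
  -- Step B: monotone increments
  have hstep : ∀ x ∈ Set.Ioc 0 xt, 0 ≤ u x θ' - u x θ ∧ u x θ' - u x θ ≤ G := by
    intro x hx
    have hxb : x ∈ Set.Ioc 0 xbar := ⟨hx.1, hx.2.trans hxtb⟩
    obtain ⟨a, ha, hva⟩ := hach x hxb θ'
    obtain ⟨b, hb, hvb⟩ := hach xt ⟨hxt0, hxtb⟩ θ
    obtain ⟨b0, hb0, hvb0⟩ := hach x hxb θ
    constructor
    · have h1 := hle x hxb θ' b0 hb0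
      nlinarith [hb0.1]
    · rcases le_total a b with hab | hab
      · have h1 := hle xt ⟨hxt0, hxtb⟩ θ' b hb
        have h2 := hle x hxb θ a ha
        nlinarith
      · have h1 := hle xt ⟨hxt0, hxtb⟩ θ' a ⟨ha.1, ha.2.trans hx.2⟩
        have h2 := hle x hxb θ b ⟨hb.1, hab.trans ha.2⟩
        simp only [hG_def]
        linarith
  -- Step C: integrals
  have hD : Integrable (fun ω => δ ^ (τ ω - t) * (u (X ω) θ' - u (X ω) θ)) μ := by
    have h := (hint θ').sub (hint θ)
    convert h using 1
    funext ω
    simp only [Pi.sub_apply]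
    ring
  have hDle : ∀ᵐ ω ∂μ,
      δ ^ (τ ω - t) * (u (X ω) θ' - u (X ω) θ) ≤ δ * G := by
    filter_upwards [hX] with ω hωX
    have hk : 1 ≤ τ ω - t := by
      have := hτ ω; omega
    have hdk : δ ^ (τ ω - t) ≤ δ := by
      calc δ ^ (τ ω - t) ≤ δ ^ 1 := pow_le_pow_of_le_one hδ0 (le_of_lt hδ1) hk
        _ = δ := pow_one δ
    obtain ⟨hi0, hile⟩ := hstep (X ω) hωX
    exact mul_le_mul hdk hile hi0 hδ0
  have hDint : ∫ ω, δ ^ (τ ω - t) * (u (X ω) θ' - u (X ω) θ) ∂μ ≤ δ * G := by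
    have h := integral_mono_ae hD (integrable_const (δ * G)) hDle
    simpa using h
  have hsplit : ∫ ω, δ ^ (τ ω - t) * (u (X ω) θ' - P ω) ∂μ
      = (∫ ω, δ ^ (τ ω - t) * (u (X ω) θ - P ω) ∂μ)
        + ∫ ω, δ ^ (τ ω - t) * (u (X ω) θ' - u (X ω) θ) ∂μ := by
    rw [← integral_add (hint θ) hD]
    congr 1
    funext ω
    ring
  have hdG : δ * G < G := by nlinarith
  have hAG : u xt θ' - pt ≥ (u xt θ - pt) + G := by
    simp only [hG_def]; linarith
  rw [hsplit]
  linarith
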